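/- (Theorem 1(ii), even r) Assume W > 0, 4I > zW, and r = 2k is even. Then H_i^0 attains its minimum over all ion configurations exactly at the configurations with n_x = k for every site x ∈ Λ, and the number of such minimizing configurations equals (C(2k,k))^{|Λ|}, where C(2k,k) = (2k)!/(k!k!). -/
import Mathlib


open Finset

/-- Occupation number (0 or 1) attached to a Boolean occupancy variable. -/
noncomputable def occ (b : Bool) : ℝ := if b then 1 else 0

/-- Total number of ions at site `x` (as a real number): `n_x = Σ_σ n_{x,σ}`. -/
noncomputable def nsite {V : Type*} {r : ℕ} (C : V → Fin r → Bool) (x : V) : ℝ :=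
  ∑ σ : Fin r, occ (C x σ)

/-- Total number of ions at site `x` (as a natural number). -/
def nnat {V : Type*} {r : ℕ} (C : V → Fin r → Bool) (x : V) : ℕ :=
  ∑ σ : Fin r, (if C x σ then 1 else 0)

/-- The classical Hamiltonian
`H_i^0(C) = 2I Σ_x Σ_{σ'<σ''} (n_{x,σ'} - 1/2)(n_{x,σ''} - 1/2)
          + (W/2) Σ_{⟨x,y⟩} (n_x - r/2)(n_y - r/2)`,
where the sum over edges `⟨x,y⟩` (each edge counted once) is written as half the
symmetric double sum over ordered adjacent pairs. -/
noncomputable def H0 {V : Type*} [Fintype V] (G : SimpleGraph V) [DecidableRel G.Adj]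
    (r : ℕ) (I W : ℝ) (C : V → Fin r → Bool) : ℝ :=
  2 * I * ∑ x : V, ∑ p ∈ Finset.univ.filter (fun p : Fin r × Fin r => p.1 < p.2),
      (occ (C x p.1) - 1 / 2) * (occ (C x p.2) - 1 / 2)
  + W / 2 * ((∑ x : V, ∑ y : V,
      (if G.Adj x y then (nsite C x - r / 2) * (nsite C y - r / 2) else 0)) / 2)

lemma sq_sum_aux {n : ℕ} (g : Fin n → ℝ) :
    (∑ σ, g σ) ^ 2 =
      ∑ σ, g σ ^ 2 +
        2 * ∑ p ∈ Finset.univ.filter (fun p : Fin n × Fin n => p.1 < p.2), g p.1 * g p.2 := by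
  have hswap :
      ∑ p ∈ Finset.univ.filter (fun p : Fin n × Fin n => p.2 < p.1), g p.1 * g p.2 =
      ∑ p ∈ Finset.univ.filter (fun p : Fin n × Fin n => p.1 < p.2), g p.1 * g p.2 := by
    refine Finset.sum_nbij' Prod.swap Prod.swap ?_ ?_ ?_ ?_ ?_ <;> simp [mul_comm]
  have hdiag :
      ∑ p ∈ Finset.univ.filter (fun p : Fin n × Fin n => p.1 = p.2), g p.1 * g p.2 =
      ∑ σ, g σ ^ 2 := by
    rw [Finset.sum_filter, Fintype.sum_prod_type]
    simp [Finset.sum_ite_eq, sq]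
  have htot : (∑ σ, g σ) ^ 2 = ∑ p : Fin n × Fin n, g p.1 * g p.2 := by
    rw [sq, Fintype.sum_mul_sum, ← Finset.sum_product']
    rfl
  have hfe : Finset.univ.filter (fun p : Fin n × Fin n => ¬ p.1 < p.2 ∧ p.1 = p.2) =
      Finset.univ.filter (fun p : Fin n × Fin n => p.1 = p.2) := by
    apply Finset.filter_congr
    intro p _
    simp only [Fin.lt_def, Fin.ext_iff]
    omega
  have hfg : Finset.univ.filter (fun p : Fin n × Fin n => ¬ p.1 < p.2 ∧ ¬ p.1 = p.2) =
      Finset.univ.filter (fun p : Fin n × Fin n => p.2 < p.1) := by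
    apply Finset.filter_congr
    intro p _
    simp only [Fin.lt_def, Fin.ext_iff]
    omega
  have hsplit :
      ∑ p ∈ Finset.univ.filter (fun p : Fin n × Fin n => ¬ p.1 < p.2), g p.1 * g p.2 =
      ∑ p ∈ Finset.univ.filter (fun p : Fin n × Fin n => p.1 = p.2), g p.1 * g p.2 +
      ∑ p ∈ Finset.univ.filter (fun p : Fin n × Fin n => p.2 < p.1), g p.1 * g p.2 := by
    rw [← Finset.sum_filter_add_sum_filter_not
        (Finset.univ.filter (fun p : Fin n × Fin n => ¬ p.1 < p.2))
        (fun p : Fin n × Fin n => p.1 = p.2) (fun p => g p.1 * g p.2),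
        Finset.filter_filter, Finset.filter_filter, hfe, hfg]
  rw [htot, ← Finset.sum_filter_add_sum_filter_not Finset.univ
      (fun p : Fin n × Fin n => p.1 < p.2) (fun p => g p.1 * g p.2), hsplit, hdiag, hswap]
  ring

/-- Per-site rewriting of the on-site term. -/
lemma persite {V : Type*} {r : ℕ} (C : V → Fin r → Bool) (x : V) :
    ∑ p ∈ Finset.univ.filter (fun p : Fin r × Fin r => p.1 < p.2),
      (occ (C x p.1) - 1 / 2) * (occ (C x p.2) - 1 / 2)
    = (nsite C x - r / 2) ^ 2 / 2 - r / 8 := by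
  have key := sq_sum_aux (fun σ => occ (C x σ) - 1 / 2)
  have h1 : ∀ σ : Fin r, (occ (C x σ) - 1 / 2) ^ 2 = 1 / 4 := by
    intro σ; unfold occ; cases C x σ <;> norm_num
  have h3 : ∑ σ : Fin r, (occ (C x σ) - 1 / 2) ^ 2 = (r : ℝ) / 4 := by
    rw [Finset.sum_congr rfl fun σ _ => h1 σ, Finset.sum_const, Finset.card_univ,
        nsmul_eq_mul, Fintype.card_fin]
    ring
  have h2 : ∑ σ : Fin r, (occ (C x σ) - 1 / 2) = nsite C x - (r : ℝ) / 2 := by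
    unfold nsite
    rw [Finset.sum_sub_distrib, Finset.sum_const, Finset.card_univ, nsmul_eq_mul,
        Fintype.card_fin]
    ring
  rw [h2, h3] at key
  linarith

/-- Rewriting of the Hamiltonian in terms of `m x = n_x - r/2`. -/
lemma H0_eq {V : Type*} [Fintype V] (G : SimpleGraph V) [DecidableRel G.Adj]
    (r : ℕ) (I W : ℝ) (C : V → Fin r → Bool) :
    H0 G r I W C = I * (∑ x, (nsite C x - r / 2) ^ 2)
      - I * r * (Fintype.card V) / 4
      + W / 4 * (∑ x, ∑ y,
          if G.Adj x y then (nsite C x - r / 2) * (nsite C y - r / 2) else 0) := by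
  unfold H0
  rw [Finset.sum_congr rfl fun x _ => persite C x, Finset.sum_sub_distrib,
      ← Finset.sum_div, Finset.sum_const, Finset.card_univ, nsmul_eq_mul]
  ring

lemma deg_sum {V : Type*} [Fintype V] (G : SimpleGraph V) [DecidableRel G.Adj]
    {z : ℕ} (hreg : G.IsRegularOfDegree z) (x : V) (c : ℝ) :
    ∑ y, (if G.Adj x y then c else 0) = z * c := by
  have hf : Finset.univ.filter (fun y => G.Adj x y) = G.neighborFinset x := by
    ext y; simp [SimpleGraph.mem_neighborFinset]
  rw [← Finset.sum_filter, hf, Finset.sum_const,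
      show #(G.neighborFinset x) = G.degree x from rfl, hreg x, nsmul_eq_mul]

/-- Lower bound on the Hamiltonian. -/
lemma H0_ge {V : Type*} [Fintype V] (G : SimpleGraph V) [DecidableRel G.Adj]
    (r z : ℕ) (hreg : G.IsRegularOfDegree z) (I W : ℝ) (hW : 0 < W)
    (C : V → Fin r → Bool) :
    (I - z * W / 4) * (∑ x, (nsite C x - r / 2) ^ 2)
      - I * r * (Fintype.card V) / 4 ≤ H0 G r I W C := by
  rw [H0_eq]
  have hm : ∀ x : V, nsite C x - (r : ℝ) / 2 = nsite C x - (r : ℝ) / 2 := fun _ => rfl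
  have hE : -(z : ℝ) * (∑ x, (nsite C x - (r : ℝ) / 2) ^ 2)
      ≤ ∑ x, ∑ y, (if G.Adj x y then (nsite C x - (r : ℝ) / 2) * (nsite C y - (r : ℝ) / 2) else 0) := by
    have hterm : ∀ x y : V,
        (if G.Adj x y then -((nsite C x - (r : ℝ) / 2) ^ 2) / 2 else 0) + (if G.Adj x y then -((nsite C y - (r : ℝ) / 2) ^ 2) / 2 else 0)
        ≤ (if G.Adj x y then (nsite C x - (r : ℝ) / 2) * (nsite C y - (r : ℝ) / 2) else 0) := by
      intro x y
      by_cases h : G.Adj x y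
      · simp only [if_pos h]
        nlinarith [sq_nonneg ((nsite C x - (r : ℝ) / 2) + (nsite C y - (r : ℝ) / 2))]
      · simp [if_neg h]
    have h1 : ∑ x, ∑ y, (if G.Adj x y then -((nsite C x - (r : ℝ) / 2) ^ 2) / 2 else 0)
        = -(z : ℝ) / 2 * ∑ x, (nsite C x - (r : ℝ) / 2) ^ 2 := by
      rw [Finset.sum_congr rfl fun x _ => deg_sum G hreg x (-((nsite C x - (r : ℝ) / 2) ^ 2) / 2), Finset.mul_sum]
      exact Finset.sum_congr rfl fun x _ => by ring
    have h2 : ∑ x, ∑ y, (if G.Adj x y then -((nsite C y - (r : ℝ) / 2) ^ 2) / 2 else 0)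
        = -(z : ℝ) / 2 * ∑ x, (nsite C x - (r : ℝ) / 2) ^ 2 := by
      rw [Finset.sum_comm]
      have inner : ∀ y : V, ∑ x, (if G.Adj x y then -((nsite C y - (r : ℝ) / 2) ^ 2) / 2 else 0)
          = (z : ℝ) * (-((nsite C y - (r : ℝ) / 2) ^ 2) / 2) := by
        intro y
        rw [Finset.sum_congr rfl fun x _ => if_congr (G.adj_comm x y) rfl rfl]
        exact deg_sum G hreg y _
      rw [Finset.sum_congr rfl fun y _ => inner y, Finset.mul_sum]
      exact Finset.sum_congr rfl fun y _ => by ring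
    calc -(z : ℝ) * (∑ x, (nsite C x - (r : ℝ) / 2) ^ 2)
        = ∑ x, ∑ y, ((if G.Adj x y then -((nsite C x - (r : ℝ) / 2) ^ 2) / 2 else 0)
            + (if G.Adj x y then -((nsite C y - (r : ℝ) / 2) ^ 2) / 2 else 0)) := by
          rw [Finset.sum_congr rfl fun x _ => Finset.sum_add_distrib,
              Finset.sum_add_distrib, h1, h2]
          ring
      _ ≤ ∑ x, ∑ y, (if G.Adj x y then (nsite C x - (r : ℝ) / 2) * (nsite C y - (r : ℝ) / 2) else 0) :=
          Finset.sum_le_sum fun x _ => Finset.sum_le_sum fun y _ => hterm x y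
  have hS : 0 ≤ ∑ x, (nsite C x - (r : ℝ) / 2) ^ 2 := Finset.sum_nonneg fun x _ => sq_nonneg _
  have hW4 : (0 : ℝ) ≤ W / 4 := by linarith
  have hmul := mul_le_mul_of_nonneg_left hE hW4
  have expand : (I - (z : ℝ) * W / 4) * (∑ x, (nsite C x - (r : ℝ) / 2) ^ 2)
      = I * (∑ x, (nsite C x - (r : ℝ) / 2) ^ 2) + W / 4 * (-(z : ℝ) * ∑ x, (nsite C x - (r : ℝ) / 2) ^ 2) := by ring
  linarith [hmul, expand]

/-- If every site has `n_x = r/2` then the Hamiltonian equals its minimal value. -/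
lemma H0_flat {V : Type*} [Fintype V] (G : SimpleGraph V) [DecidableRel G.Adj]
    (r : ℕ) (I W : ℝ) (C : V → Fin r → Bool)
    (h : ∀ x, nsite C x = r / 2) :
    H0 G r I W C = - (I * r * (Fintype.card V) / 4) := by
  rw [H0_eq]
  simp [h]

lemma nsite_eq_nnat {V : Type*} {r : ℕ} (C : V → Fin r → Bool) (x : V) :
    nsite C x = (nnat C x : ℝ) := by
  unfold nsite nnat occ
  push_cast
  refine Finset.sum_congr rfl fun σ _ => ?_
  split <;> simp

/-- **Theorem 1(ii), even `r`.** For `W > 0`, `4I > zW`, `r = 2k`, the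
minimizers of `H_i^0` are exactly the configurations with `n_x = k` at every site, and
their number is `C(2k,k)^{|Λ|}`. -/
theorem statement6
    {V : Type*} [Fintype V] [DecidableEq V]
    (G : SimpleGraph V) [DecidableRel G.Adj]
    (z r : ℕ) (hz : 2 ≤ z) (hr : 2 ≤ r)
    (hreg : G.IsRegularOfDegree z) (hconn : G.Connected)
    (Λe Λo : Finset V)
    (hcover : ∀ v : V, v ∈ Λe ∨ v ∈ Λo) (hdisj : Disjoint Λe Λo)
    (hbip : ∀ x y : V, G.Adj x y → (x ∈ Λe ∧ y ∈ Λo) ∨ (x ∈ Λo ∧ y ∈ Λe))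
    (I W : ℝ) (hW : 0 < W) (hIW : (z : ℝ) * W < 4 * I) (k : ℕ) (hrk : r = 2 * k) :
    {C : V → Fin r → Bool | ∀ C' : V → Fin r → Bool, H0 G r I W C ≤ H0 G r I W C'} =
      {C : V → Fin r → Bool | ∀ x : V, nnat C x = k} ∧
    Nat.card {C : V → Fin r → Bool |
        ∀ C' : V → Fin r → Bool, H0 G r I W C ≤ H0 G r I W C'} =
      (Nat.choose (2 * k) k) ^ (Fintype.card V) := by
  have hrhalf : (r : ℝ) / 2 = (k : ℝ) := by
    rw [hrk]; push_cast; ring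
  -- the flat configuration
  set C0 : V → Fin r → Bool := fun _ σ => decide (σ.1 < k) with hC0
  have hC0k : ∀ x : V, nnat C0 x = k := by
    intro x
    unfold nnat
    simp only [hC0, decide_eq_true_eq]
    rw [Fin.sum_univ_eq_sum_range (fun i => if i < k then 1 else 0) r,
        ← Finset.sum_filter]
    have : (Finset.range r).filter (fun i => i < k) = Finset.range k := by
      ext i
      simp only [Finset.mem_filter, Finset.mem_range]
      omega
    simp [this]
  have hnsite_iff : ∀ (C : V → Fin r → Bool) (x : V),
      nnat C x = k ↔ nsite C x = (r : ℝ) / 2 := by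
    intro C x
    rw [nsite_eq_nnat, hrhalf]
    exact_mod_cast (Nat.cast_inj (R := ℝ)).symm
  have hC0flat : ∀ x, nsite C0 x = (r : ℝ) / 2 := fun x => (hnsite_iff C0 x).1 (hC0k x)
  have hC0val : H0 G r I W C0 = - (I * r * (Fintype.card V) / 4) :=
    H0_flat G r I W C0 hC0flat
  have hcoef : 0 < I - (z : ℝ) * W / 4 := by linarith
  -- the set equality
  have hset : {C : V → Fin r → Bool | ∀ C' : V → Fin r → Bool, H0 G r I W C ≤ H0 G r I W C'} =
      {C : V → Fin r → Bool | ∀ x : V, nnat C x = k} := by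
    ext C
    simp only [Set.mem_setOf_eq]
    constructor
    · intro hmin x
      have h1 : H0 G r I W C ≤ - (I * r * (Fintype.card V) / 4) := by
        rw [← hC0val]; exact hmin C0
      have h2 := H0_ge G r z hreg I W hW C
      have hS0 : ∑ x : V, (nsite C x - r / 2) ^ 2 ≤ 0 := by
        by_contra hpos
        push_neg at hpos
        nlinarith
      have hS : ∑ x : V, (nsite C x - r / 2) ^ 2 = 0 :=
        le_antisymm hS0 (Finset.sum_nonneg fun x _ => sq_nonneg _)
      have hx : (nsite C x - r / 2) ^ 2 = 0 := by
        have := (Finset.sum_eq_zero_iff_of_nonneg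
          (fun x _ => sq_nonneg (nsite C x - (r : ℝ) / 2))).1 hS x (Finset.mem_univ x)
        exact this
      have : nsite C x = (r : ℝ) / 2 := by
        have := sq_eq_zero_iff.1 hx
        linarith
      exact (hnsite_iff C x).2 this
    · intro hC C'
      have hflat : ∀ x, nsite C x = (r : ℝ) / 2 := fun x => (hnsite_iff C x).1 (hC x)
      rw [H0_flat G r I W C hflat]
      have h2 := H0_ge G r z hreg I W hW C'
      have hS : 0 ≤ ∑ x : V, (nsite C' x - r / 2) ^ 2 :=
        Finset.sum_nonneg fun x _ => sq_nonneg _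
      nlinarith
  refine ⟨hset, ?_⟩
  rw [hset]
  -- counting
  have hcard1 : Nat.card {C : V → Fin r → Bool | ∀ x : V, nnat C x = k}
      = Nat.card (∀ _ : V, {g : Fin r → Bool // (∑ σ : Fin r, if g σ then 1 else 0) = k}) :=
    Nat.card_congr (Equiv.subtypePiEquivPi
      (p := fun (_ : V) (g : Fin r → Bool) => (∑ σ : Fin r, if g σ then 1 else 0) = k))
  rw [hcard1, Nat.card_pi, Finset.prod_const, Finset.card_univ]
  congr 1
  have e2 : {g : Fin r → Bool // (∑ σ : Fin r, if g σ then 1 else 0) = k}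
      ≃ {s : Finset (Fin r) // s.card = k} :=
    { toFun := fun g => ⟨Finset.univ.filter (fun σ => g.1 σ = true), by
        rw [Finset.card_filter]
        exact g.2⟩
      invFun := fun s => ⟨fun σ => decide (σ ∈ s.1), by
        simp only [decide_eq_true_eq]
        rw [← Finset.sum_filter]
        simpa using s.2⟩
      left_inv := fun g => Subtype.ext (funext fun σ => by simp)
      right_inv := fun s => Subtype.ext (by ext σ; simp) }
  rw [Nat.card_congr e2, Nat.card_eq_fintype_card, Fintype.card_finset_len,
      Fintype.card_fin, hrk]
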